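/- The infinite series s_N(ℓ) = ∑_{k=−∞}^{+∞} (−1)^{k(N−1)} sinc(N(ℓ − k)) converges and equals the Dirichlet kernel D_N(ℓ) = sin(πNℓ)/(N sin(πℓ)) for all ℓ where sin(πℓ) ≠ 0, where sinc(x) = sin(πx)/(πx). -/

import Mathlib

open Real MeasureTheory Filter Finset Topology

set_option maxHeartbeats 1000000

/-- Normalized sinc function: `sinc x = sin(πx)/(πx)`, `sinc 0 = 1`. -/
noncomputable def sinc (x : ℝ) : ℝ :=
  if x = 0 then 1 else Real.sin (Real.pi * x) / (Real.pi * x)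

private lemma sum_Icc_symm (f : ℤ → ℝ) (K : ℕ) :
    ∑ k ∈ Finset.Icc (-(K:ℤ)) (K:ℤ), f k
      = f 0 + ∑ j ∈ Finset.range K, (f ((j:ℤ)+1) + f (-((j:ℤ)+1))) := by
  induction K with
  | zero => simp
  | succ K ih =>
    have h1 : Finset.Icc (-((K+1:ℕ)):ℤ) ((K+1:ℕ):ℤ)
        = insert (-((K:ℤ)+1)) (insert ((K:ℤ)+1) (Finset.Icc (-(K:ℤ)) (K:ℤ))) := by
      ext x; simp only [Finset.mem_Icc, Finset.mem_insert]; push_cast; omega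
    rw [h1, Finset.sum_insert (by simp only [Finset.mem_insert, Finset.mem_Icc]; omega),
      Finset.sum_insert (by simp only [Finset.mem_Icc]; omega), ih, Finset.sum_range_succ]
    ring

private lemma dirichlet_closed (K : ℕ) (u : ℝ) :
    Real.sin (u/2) * (1 + 2 * ∑ j ∈ Finset.range K, Real.cos (((j:ℝ)+1)*u))
      = Real.sin (((K:ℝ)+1/2)*u) := by
  induction K with
  | zero => simp; ring_nf
  | succ K ih =>
    rw [Finset.sum_range_succ]
    push_cast
    have e1 : (((K:ℝ)+1)+1/2)*u = ((K:ℝ)+1)*u + u/2 := by ring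
    have e2 : ((K:ℝ)+1/2)*u = ((K:ℝ)+1)*u - u/2 := by ring
    rw [e1, Real.sin_add]
    have expand : Real.sin (u/2) * (1 + 2 * (∑ j ∈ Finset.range K, Real.cos (((j:ℝ)+1)*u)
        + Real.cos (((K:ℝ)+1)*u)))
        = Real.sin (u/2) * (1 + 2 * ∑ j ∈ Finset.range K, Real.cos (((j:ℝ)+1)*u))
          + 2 * Real.sin (u/2) * Real.cos (((K:ℝ)+1)*u) := by ring
    rw [expand, ih, e2, Real.sin_sub]
    ring

private lemma integral_cos_shift (c : ℝ) (hc : c ≠ 0) :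
    ∫ u in (0:ℝ)..π, Real.cos (c*u) = Real.sin (c*π)/c := by
  rw [intervalIntegral.integral_comp_mul_left (fun x => Real.cos x) hc]
  simp [div_eq_inv_mul]

private lemma neg_one_pow_combine (k : ℤ) (N : ℕ) :
    (-1:ℝ) ^ (k * ((N:ℤ) - 1)) * (-1:ℝ) ^ ((N:ℤ)*k) = (-1:ℝ) ^ k := by
  rw [← zpow_add₀ (by norm_num : (-1:ℝ) ≠ 0)]
  have e : k * ((N:ℤ) - 1) + (N:ℤ)*k = 2*((N:ℤ)*k) - k := by ring
  rw [e, zpow_sub₀ (by norm_num : (-1:ℝ) ≠ 0), zpow_mul]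
  norm_num
  rcases Int.even_or_odd k with hk | hk
  · rw [hk.neg_one_zpow]; norm_num
  · rw [hk.neg_one_zpow]; norm_num

private lemma cont_sum (K : ℕ) :
    Continuous (fun u : ℝ => ∑ j ∈ Finset.range K, Real.cos (((j:ℝ)+1)*u)) :=
  continuous_finset_sum _ fun _ _ => Real.continuous_cos.comp (continuous_const.mul continuous_id)

private lemma dirichlet_integral (K : ℕ) :
    ∫ u in (0:ℝ)..π, (1 + 2 * ∑ j ∈ Finset.range K, Real.cos (((j:ℝ)+1)*u)) = π := by
  have hci : ∀ j : ℕ, IntervalIntegrable (fun u => Real.cos (((j:ℝ)+1)*u)) volume 0 π :=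
    fun j => (Real.continuous_cos.comp (continuous_const.mul continuous_id)).intervalIntegrable 0 π
  rw [intervalIntegral.integral_add intervalIntegrable_const
      ((show Continuous (fun u : ℝ => 2 * ∑ j ∈ Finset.range K, Real.cos (((j:ℝ)+1)*u)) from
        continuous_const.mul (cont_sum K)).intervalIntegrable 0 π),
    intervalIntegral.integral_const_mul,
    intervalIntegral.integral_finset_sum (fun j _ => hci j)]
  have : ∀ j ∈ Finset.range K, (∫ u in (0:ℝ)..π, Real.cos (((j:ℝ)+1)*u)) = 0 := by
    intro j _
    rw [integral_cos_shift _ (by positivity)]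
    have : ((j:ℝ)+1)*π = ((j+1:ℕ):ℝ)*π := by push_cast; ring
    rw [this, Real.sin_nat_mul_pi]
    simp
  rw [Finset.sum_congr rfl this]
  simp

private lemma point_id (ℓ : ℝ) (K : ℕ) (u : ℝ) :
    ∑ k ∈ Finset.Icc (-(K:ℤ)) (K:ℤ), Real.cos ((ℓ - (k:ℝ))*u)
      = Real.cos (ℓ*u) * (1 + 2 * ∑ j ∈ Finset.range K, Real.cos (((j:ℝ)+1)*u)) := by
  rw [sum_Icc_symm (fun k => Real.cos ((ℓ - (k:ℝ))*u)) K]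
  have hterm : ∀ j : ℕ,
      Real.cos ((ℓ - ((j:ℝ)+1))*u) + Real.cos ((ℓ - (-((j:ℝ)+1)))*u)
        = 2 * Real.cos (ℓ*u) * Real.cos (((j:ℝ)+1)*u) := by
    intro j
    rw [show (ℓ - ((j:ℝ)+1))*u = ℓ*u - ((j:ℝ)+1)*u by ring,
      show (ℓ - (-((j:ℝ)+1)))*u = ℓ*u + ((j:ℝ)+1)*u by ring,
      Real.cos_sub, Real.cos_add]
    ring
  push_cast
  rw [Finset.sum_congr rfl (fun j _ => hterm j), Finset.mul_sum, mul_add, mul_one,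
    Finset.mul_sum]
  simp only [sub_zero]
  congr 1
  exact Finset.sum_congr rfl fun j _ => by ring

private lemma integral_cosD (ℓ : ℝ) (hk : ∀ k : ℤ, ℓ - (k:ℝ) ≠ 0) (K : ℕ) :
    (∫ u in (0:ℝ)..π, Real.cos (ℓ*u) * (1 + 2 * ∑ j ∈ Finset.range K, Real.cos (((j:ℝ)+1)*u)))
      = Real.sin (π*ℓ) * ∑ k ∈ Finset.Icc (-(K:ℤ)) (K:ℤ), (-1:ℝ)^k / (ℓ - (k:ℝ)) := by
  have h1 : (∫ u in (0:ℝ)..π, Real.cos (ℓ*u) * (1 + 2 * ∑ j ∈ Finset.range K, Real.cos (((j:ℝ)+1)*u)))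
      = ∫ u in (0:ℝ)..π, ∑ k ∈ Finset.Icc (-(K:ℤ)) (K:ℤ), Real.cos ((ℓ - (k:ℝ))*u) := by
    refine intervalIntegral.integral_congr fun u _ => (point_id ℓ K u).symm
  have h2 := intervalIntegral.integral_finset_sum (μ := volume) (a := (0:ℝ)) (b := π)
    (s := Finset.Icc (-(K:ℤ)) (K:ℤ)) (f := fun k u => Real.cos ((ℓ - (k:ℝ))*u))
    (fun k _ => ((by fun_prop : Continuous fun u : ℝ => Real.cos ((ℓ - (k:ℝ))*u)).intervalIntegrable 0 π))
  rw [h1, h2]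
  rw [Finset.mul_sum]
  refine Finset.sum_congr rfl fun k _ => ?_
  rw [integral_cos_shift _ (hk k)]
  have e : (ℓ - (k:ℝ))*π = ℓ*π - (k:ℝ)*π := by ring
  rw [e, Real.sin_sub_int_mul_pi, mul_comm π ℓ]
  rw [mul_comm ((-1:ℝ)^k) (Real.sin (ℓ*π)), mul_div_assoc, mul_comm ℓ π]

private lemma g_integrable (ℓ : ℝ) :
    Integrable (Set.indicator (Set.Ioc 0 π)
      (fun u => (Real.cos (ℓ*u) - 1)/Real.sin (u/2))) := by
  rw [integrable_indicator_iff measurableSet_Ioc]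
  refine Measure.integrableOn_of_bounded (M := π^2*ℓ^2/2) measure_Ioc_lt_top.ne ?_ ?_
  · exact ((Real.continuous_cos.comp (continuous_const.mul continuous_id)).sub
      continuous_const).measurable.div
      (Real.continuous_sin.comp (continuous_id.div_const 2)).measurable
      |>.aestronglyMeasurable
  · rw [ae_restrict_iff' measurableSet_Ioc]
    filter_upwards with u hu
    obtain ⟨hu0, hu1⟩ := hu
    have hs : u/π ≤ Real.sin (u/2) := by
      have := Real.mul_le_sin (x := u/2) (by linarith) (by linarith)
      calc u/π = 2/π * (u/2) := by field_simp
        _ ≤ _ := this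
    have hsp : 0 < Real.sin (u/2) :=
      lt_of_lt_of_le (by positivity) hs
    have hc1 : 1 - Real.cos (ℓ*u) ≤ (ℓ*u)^2/2 := by
      nlinarith [Real.one_sub_sq_div_two_le_cos (x := ℓ*u)]
    have hc0 : 0 ≤ 1 - Real.cos (ℓ*u) := by nlinarith [Real.cos_le_one (ℓ*u)]
    rw [Real.norm_eq_abs, abs_div, abs_of_pos hsp]
    have habs : |Real.cos (ℓ*u) - 1| = 1 - Real.cos (ℓ*u) := by
      rw [abs_sub_comm, abs_of_nonneg hc0]
    rw [habs, div_le_iff₀ hsp]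
    have hππ : (0:ℝ) < π := Real.pi_pos
    have he : π^2*ℓ^2/2*(u/π) = π*ℓ^2*u/2 := by field_simp
    nlinarith [he, mul_nonneg (mul_nonneg (sq_nonneg ℓ) hu0.le) (sub_nonneg.2 hu1),
      mul_le_mul_of_nonneg_left hs (by positivity : (0:ℝ) ≤ π^2*ℓ^2/2)]

private lemma riemann_lebesgue_sin (g : ℝ → ℝ) (hg : Integrable g) :
    Tendsto (fun K : ℕ => ∫ u, g u * Real.sin (((K:ℝ)+1/2)*u)) atTop (𝓝 0) := by
  have hgC : Integrable (fun u => (g u : ℂ)) := hg.ofReal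
  have H := Real.tendsto_integral_exp_smul_cocompact (fun u => (g u : ℂ))
  have hw : Tendsto (fun K : ℕ => ((K:ℝ)+1/2)/(2*π)) atTop atTop :=
    (tendsto_atTop_add_const_right _ _ tendsto_natCast_atTop_atTop).atTop_div_const
      (by positivity)
  have hcc : Tendsto (fun K : ℕ => ((K:ℝ)+1/2)/(2*π)) atTop (cocompact ℝ) := by
    rw [cocompact_eq_atBot_atTop]
    exact hw.mono_right le_sup_right
  have H2 := H.comp hcc
  have H3 := (Complex.continuous_im.tendsto 0).comp H2
  simp only [Complex.zero_im] at H3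
  have heq : ∀ K : ℕ,
      (∫ v : ℝ, Real.fourierChar (-(v * (((K:ℝ)+1/2)/(2*π)))) • ((g v : ℂ))).im
        = -∫ u, g u * Real.sin (((K:ℝ)+1/2)*u) := by
    intro K
    set w : ℝ := ((K:ℝ)+1/2)/(2*π) with hwdef
    have hi : Integrable (fun v : ℝ => Real.fourierChar (-(v * w)) • ((g v : ℂ))) :=
      by have := (Real.fourierIntegral_convergent_iff w).2 hgC; simpa [mul_comm] using this
    rw [show (∫ v : ℝ, Real.fourierChar (-(v * w)) • ((g v : ℂ))).im
        = RCLike.im (∫ v : ℝ, Real.fourierChar (-(v * w)) • ((g v : ℂ))) from rfl,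
      ← integral_im hi, ← integral_neg]
    refine integral_congr_ae (Eventually.of_forall fun v => ?_)
    have hπ : (π : ℝ) ≠ 0 := Real.pi_ne_zero
    have harg : 2 * π * (-(v * w)) = -(((K:ℝ)+1/2)*v) := by
      rw [hwdef]; field_simp
    show RCLike.im (Real.fourierChar (-(v * w)) • ((g v : ℂ))) = _
    rw [Circle.smul_def, smul_eq_mul]
    have : ((Real.fourierChar (-(v * w)) : Circle) : ℂ)
        = Complex.exp ((2 * π * (-(v * w)) : ℝ) * Complex.I) := Real.fourierChar_apply _
    simp only [RCLike.im_to_complex]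
    rw [this, Complex.mul_im, Complex.exp_ofReal_mul_I_re, Complex.exp_ofReal_mul_I_im,
      Complex.ofReal_re, Complex.ofReal_im, harg, Real.sin_neg]
    ring
  have H4 : Tendsto (fun K : ℕ => -∫ u, g u * Real.sin (((K:ℝ)+1/2)*u)) atTop (𝓝 0) := by
    refine H3.congr fun K => ?_
    exact heq K
  have := H4.neg
  simpa using this

private lemma key_tendsto (ℓ : ℝ) (h : Real.sin (π*ℓ) ≠ 0) :
    Tendsto (fun K : ℕ => ∑ k ∈ Finset.Icc (-(K:ℤ)) (K:ℤ), (-1:ℝ)^k / (ℓ - (k:ℝ)))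
      atTop (𝓝 (π / Real.sin (π*ℓ))) := by
  have hk : ∀ k : ℤ, ℓ - (k:ℝ) ≠ 0 := by
    intro k hkk
    apply h
    have : ℓ = (k:ℝ) := by linarith
    rw [this, mul_comm]
    exact Real.sin_int_mul_pi k
  set D : ℕ → ℝ → ℝ := fun K u => 1 + 2 * ∑ j ∈ Finset.range K, Real.cos (((j:ℝ)+1)*u) with hD
  set g : ℝ → ℝ := Set.indicator (Set.Ioc 0 π)
      (fun u => (Real.cos (ℓ*u) - 1)/Real.sin (u/2)) with hgdef
  set T : ℕ → ℝ := fun K => ∑ k ∈ Finset.Icc (-(K:ℤ)) (K:ℤ), (-1:ℝ)^k / (ℓ - (k:ℝ)) with hT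
  have hDcont : ∀ K, Continuous (D K) := fun K =>
    continuous_const.add (continuous_const.mul (cont_sum K))
  -- the error term
  have hsplit : ∀ K : ℕ, Real.sin (π*ℓ) * T K
      = π + ∫ u in (0:ℝ)..π, (Real.cos (ℓ*u) - 1) * D K u := by
    intro K
    have hint : (∫ u in (0:ℝ)..π, (Real.cos (ℓ*u) - 1) * D K u)
        = (∫ u in (0:ℝ)..π, Real.cos (ℓ*u) * D K u) - ∫ u in (0:ℝ)..π, D K u := by
      rw [← intervalIntegral.integral_sub
        ((show Continuous (fun u : ℝ => Real.cos (ℓ*u) * D K u) from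
          (by fun_prop : Continuous fun u : ℝ => Real.cos (ℓ*u)).mul
          (hDcont K)).intervalIntegrable 0 π) ((hDcont K).intervalIntegrable 0 π)]
      refine intervalIntegral.integral_congr fun u _ => by simp [hD]; ring
    rw [hint, integral_cosD ℓ hk K, dirichlet_integral K]
    ring
  -- error term as a full-line integral against sin((K+1/2)u)
  have herr : ∀ K : ℕ, (∫ u in (0:ℝ)..π, (Real.cos (ℓ*u) - 1) * D K u)
      = ∫ u, g u * Real.sin (((K:ℝ)+1/2)*u) := by
    intro K
    rw [intervalIntegral.integral_of_le Real.pi_pos.le]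
    have : (fun u => g u * Real.sin (((K:ℝ)+1/2)*u))
        = Set.indicator (Set.Ioc 0 π)
          (fun u => ((Real.cos (ℓ*u) - 1)/Real.sin (u/2)) * Real.sin (((K:ℝ)+1/2)*u)) := by
      funext u
      rw [hgdef]
      by_cases hu : u ∈ Set.Ioc (0:ℝ) π
      · rw [Set.indicator_of_mem hu, Set.indicator_of_mem hu]
      · rw [Set.indicator_of_notMem hu, Set.indicator_of_notMem hu, zero_mul]
    rw [this, integral_indicator measurableSet_Ioc]
    refine (setIntegral_congr_fun measurableSet_Ioc fun u hu => ?_).symm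
    obtain ⟨hu0, hu1⟩ := hu
    have hsp : 0 < Real.sin (u/2) := by
      apply Real.sin_pos_of_pos_of_lt_pi (by linarith)
      linarith [Real.pi_pos]
    have hDu : Real.sin (u/2) * D K u = Real.sin (((K:ℝ)+1/2)*u) := dirichlet_closed K u
    have hsne : Real.sin (u/2) ≠ 0 := ne_of_gt hsp
    calc (Real.cos (ℓ*u) - 1)/Real.sin (u/2) * Real.sin (((K:ℝ)+1/2)*u)
        = (Real.cos (ℓ*u) - 1)/Real.sin (u/2) * (Real.sin (u/2) * D K u) := by rw [hDu]
      _ = (Real.cos (ℓ*u) - 1) * D K u := by field_simp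
  have hE : Tendsto (fun K : ℕ => ∫ u in (0:ℝ)..π, (Real.cos (ℓ*u) - 1) * D K u)
      atTop (𝓝 0) := by
    have := riemann_lebesgue_sin g (by rw [hgdef]; exact g_integrable ℓ)
    exact (this.congr fun K => (herr K).symm)
  have hST : Tendsto (fun K => Real.sin (π*ℓ) * T K) atTop (𝓝 π) := by
    have := hE.const_add π
    simp only [add_zero] at this
    exact this.congr fun K => (hsplit K).symm
  have := hST.div_const (Real.sin (π*ℓ))
  exact this.congr fun K => by rw [mul_comm, mul_div_assoc, div_self h, mul_one]

/-- Whittaker–Shannon interpolation of the LAD response (with `d = λ/2`, so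
`B_N = N`): the symmetric series `∑_{k∈ℤ} (-1)^{k(N-1)} sinc(N(ℓ-k))` converges
to the Dirichlet kernel `sin(πNℓ)/(N sin(πℓ))` whenever `sin(πℓ) ≠ 0`. -/
theorem stmt_5 (N : ℕ) (hN : 1 ≤ N) (ℓ : ℝ) (h : Real.sin (Real.pi * ℓ) ≠ 0) :
    Filter.Tendsto (fun K : ℕ => ∑ k ∈ Finset.Icc (-(K : ℤ)) (K : ℤ),
        (-1 : ℝ) ^ (k * ((N : ℤ) - 1)) * _root_.sinc ((N : ℝ) * (ℓ - (k : ℝ))))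
      Filter.atTop
      (nhds (Real.sin (Real.pi * N * ℓ) / (N * Real.sin (Real.pi * ℓ)))) := by
  have hk : ∀ k : ℤ, ℓ - (k:ℝ) ≠ 0 := by
    intro k hkk
    apply h
    have : ℓ = (k:ℝ) := by linarith
    rw [this, mul_comm]
    exact Real.sin_int_mul_pi k
  have hNR : (N:ℝ) ≠ 0 := Nat.cast_ne_zero.2 (by omega)
  have hπ : (π : ℝ) ≠ 0 := Real.pi_ne_zero
  have term_eq : ∀ k : ℤ, (-1:ℝ) ^ (k * ((N:ℤ) - 1)) * _root_.sinc ((N:ℝ) * (ℓ - (k:ℝ)))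
      = (Real.sin (π*(N:ℝ)*ℓ)/(π*(N:ℝ))) * ((-1:ℝ)^k / (ℓ - (k:ℝ))) := by
    intro k
    have hx : (N:ℝ)*(ℓ - (k:ℝ)) ≠ 0 := mul_ne_zero hNR (hk k)
    rw [_root_.sinc, if_neg hx]
    have hsin : Real.sin (π * ((N:ℝ)*(ℓ - (k:ℝ))))
        = (-1:ℝ)^((N:ℤ)*k) * Real.sin (π*(N:ℝ)*ℓ) := by
      have e : π * ((N:ℝ)*(ℓ - (k:ℝ))) = π*(N:ℝ)*ℓ - (((N:ℤ)*k : ℤ):ℝ)*π := by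
        push_cast; ring
      rw [e, Real.sin_sub_int_mul_pi]
    rw [hsin]
    have hcomb := neg_one_pow_combine k N
    calc (-1:ℝ) ^ (k * ((N:ℤ) - 1)) * ((-1:ℝ)^((N:ℤ)*k) * Real.sin (π*(N:ℝ)*ℓ)
          / (π * ((N:ℝ)*(ℓ - (k:ℝ)))))
        = ((-1:ℝ) ^ (k * ((N:ℤ) - 1)) * (-1:ℝ)^((N:ℤ)*k))
          * (Real.sin (π*(N:ℝ)*ℓ) / (π * ((N:ℝ)*(ℓ - (k:ℝ))))) := by ring
      _ = (-1:ℝ)^k * (Real.sin (π*(N:ℝ)*ℓ) / (π * ((N:ℝ)*(ℓ - (k:ℝ))))) := by rw [hcomb]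
      _ = (Real.sin (π*(N:ℝ)*ℓ)/(π*(N:ℝ))) * ((-1:ℝ)^k / (ℓ - (k:ℝ))) := by
          rw [div_mul_div_comm, mul_comm (Real.sin (π*(N:ℝ)*ℓ)) ((-1:ℝ)^k),
            ← mul_div_assoc, mul_assoc]
          ring_nf
  have hsum : ∀ K : ℕ, (∑ k ∈ Finset.Icc (-(K : ℤ)) (K : ℤ),
        (-1 : ℝ) ^ (k * ((N : ℤ) - 1)) * _root_.sinc ((N : ℝ) * (ℓ - (k : ℝ))))
      = (Real.sin (π*(N:ℝ)*ℓ)/(π*(N:ℝ)))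
        * ∑ k ∈ Finset.Icc (-(K : ℤ)) (K : ℤ), (-1:ℝ)^k / (ℓ - (k:ℝ)) := by
    intro K
    rw [Finset.mul_sum]
    exact Finset.sum_congr rfl fun k _ => term_eq k
  have hmain := (key_tendsto ℓ h).const_mul (Real.sin (π*(N:ℝ)*ℓ)/(π*(N:ℝ)))
  have hval : (Real.sin (π*(N:ℝ)*ℓ)/(π*(N:ℝ))) * (π / Real.sin (π*ℓ))
      = Real.sin (π*(N:ℝ)*ℓ) / ((N:ℝ) * Real.sin (π*ℓ)) := by
    field_simp
  rw [← hval]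
  exact hmain.congr fun K => (hsum K).symm
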